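/- arXiv:2106.11165 — 3 statements merged into one kernel-verified Lean document; each statement's English description precedes it below -/
import Mathlib

section
/- Let γ₁,γ₂∈(1,∞) with 1/γ₁ + 1/γ₂ = 1, let a,b>0 and c≥1. Then a·b < (c^{γ₁-1}/(e(γ₁-1)))·a^{γ₁} + (1/c)·b^{γ₂}. -/
theorem stmt_2 (γ₁ γ₂ a b c : ℝ) (h₁ : 1 < γ₁) (h₂ : 1 < γ₂)
    (hconj : 1 / γ₁ + 1 / γ₂ = 1) (ha : 0 < a) (hb : 0 < b) (hc : 1 ≤ c) :
    a * b < c ^ (γ₁ - 1) / (Real.exp 1 * (γ₁ - 1)) * a ^ γ₁ + (1 / c) * b ^ γ₂ := by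
  have hγ₁0 : 0 < γ₁ := by linarith
  have hγ₂0 : 0 < γ₂ := by linarith
  have hγ₁1 : 0 < γ₁ - 1 := by linarith
  have hc0 : 0 < c := lt_of_lt_of_le one_pos hc
  have hmul : γ₂ * (γ₁ - 1) = γ₁ := by
    field_simp at hconj
    nlinarith [hconj]
  -- key exponential inequality : e < γ₂ ^ γ₁
  have hlog : 1 / γ₁ < Real.log γ₂ := by
    have h := Real.log_lt_sub_one_of_pos (x := 1 / γ₂) (by positivity)
      (by intro h; rw [div_eq_one_iff_eq (by positivity)] at h; linarith)
    rw [Real.log_div one_ne_zero (by positivity), Real.log_one] at h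
    have : 1 / γ₂ = 1 - 1 / γ₁ := by linarith
    rw [this] at h
    linarith
  have he : Real.exp 1 < γ₂ ^ γ₁ := by
    rw [Real.rpow_def_of_pos hγ₂0]
    apply Real.exp_lt_exp.mpr
    have := (mul_lt_mul_iff_right₀ hγ₁0).mpr hlog
    rw [mul_one_div, div_self (ne_of_gt hγ₁0)] at this
    linarith [this, mul_comm γ₁ (Real.log γ₂)]
  -- Young's inequality with t = (c/γ₂)^(1/γ₂)
  set t : ℝ := (c / γ₂) ^ (1 / γ₂) with ht
  have ht0 : 0 < t := by positivity
  have hcg : (0:ℝ) < c / γ₂ := by positivity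
  have hce : γ₁.HolderConjugate γ₂ := Real.holderConjugate_iff.mpr ⟨h₁, by rw [← one_div, ← one_div]; exact hconj⟩
  have hyoung := Real.young_inequality_of_nonneg
    (mul_nonneg ht0.le ha.le) (le_of_lt (div_pos hb ht0)) hce
  have habt : (t * a) * (b / t) = a * b := by field_simp
  rw [habt] at hyoung
  have htγ₂ : t ^ γ₂ = c / γ₂ := by
    rw [ht, ← Real.rpow_mul hcg.le, one_div, inv_mul_cancel₀ (ne_of_gt hγ₂0),
      Real.rpow_one]
  have htγ₁ : t ^ γ₁ = (c / γ₂) ^ (γ₁ - 1) := by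
    rw [ht, ← Real.rpow_mul hcg.le]
    congr 1
    field_simp
    nlinarith [hmul]
  have hterm2 : (b / t) ^ γ₂ / γ₂ = (1 / c) * b ^ γ₂ := by
    rw [Real.div_rpow hb.le ht0.le, htγ₂]
    field_simp
  have hterm1 : (t * a) ^ γ₁ / γ₁ = (c / γ₂) ^ (γ₁ - 1) / γ₁ * a ^ γ₁ := by
    rw [Real.mul_rpow ht0.le ha.le, htγ₁]
    ring
  rw [hterm1, hterm2] at hyoung
  have hcoef : (c / γ₂) ^ (γ₁ - 1) / γ₁ < c ^ (γ₁ - 1) / (Real.exp 1 * (γ₁ - 1)) := by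
    rw [Real.div_rpow hc0.le hγ₂0.le, div_div]
    apply div_lt_div_of_pos_left (by positivity) (by positivity)
    have hpow : γ₂ ^ (γ₁ - 1) * γ₂ = γ₂ ^ γ₁ := by
      rw [← Real.rpow_add_one (ne_of_gt hγ₂0)]
      ring_nf
    nlinarith [he, Real.rpow_pos_of_pos hγ₂0 (γ₁ - 1), hmul, hpow]
  have hfin : (c / γ₂) ^ (γ₁ - 1) / γ₁ * a ^ γ₁
      < c ^ (γ₁ - 1) / (Real.exp 1 * (γ₁ - 1)) * a ^ γ₁ :=
    (mul_lt_mul_iff_left₀ (Real.rpow_pos_of_pos ha γ₁)).mpr hcoef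
  linarith
end

section
/- Let w:𝕋→ℝ be continuously differentiable on the unit-volume torus, let p≥2 be an even integer and q a real with p/2 < q ≤ p+1. Set A := ∫_𝕋 w^{p-2}|∂_x w|² and B := ∫_𝕋 w^{p+2}. Then ∫_𝕋 |∂_x (w^q)| ≤ q · B^{(2q-p)/(2(p+2))} · A^{1/2}. -/
open MeasureTheory

private lemma cont_abs_rpow {f : ℝ → ℝ} (hf : Continuous f) {r : ℝ} (hr : 0 ≤ r) :
    Continuous fun x => |f x| ^ r :=
  continuous_iff_continuousAt.2 fun _ => (hf.abs.continuousAt).rpow_const (Or.inr hr)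

private lemma memLp_of_cont {f : ℝ → ℝ} (hf : Continuous f) (s : ENNReal) :
    MemLp f s (volume.restrict (Set.Ioc (0:ℝ) 1)) := by
  obtain ⟨C, hC⟩ := (isCompact_Icc (a := (0:ℝ)) (b := 1)).exists_bound_of_continuousOn
    hf.continuousOn
  refine MemLp.of_bound hf.aestronglyMeasurable.restrict C ?_
  refine (ae_restrict_iff' measurableSet_Ioc).2 (Filter.Eventually.of_forall fun x hx => ?_)
  exact hC x (Set.Ioc_subset_Icc_self hx)

theorem stmt_4 (w : ℝ → ℝ) (hper : Function.Periodic w 1) (hw : ContDiff ℝ 1 w)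
    (p : ℕ) (hp : 2 ≤ p) (hpeven : Even p)
    (q : ℝ) (hq1 : (p:ℝ) / 2 < q) (hq2 : q ≤ (p:ℝ) + 1) :
    ∫ x in (0:ℝ)..1, q * |w x| ^ (q - 1) * |deriv w x| ≤
      q * (∫ x in (0:ℝ)..1, |w x| ^ ((p:ℝ) + 2)) ^ ((2 * q - (p:ℝ)) / (2 * ((p:ℝ) + 2))) *
        (∫ x in (0:ℝ)..1, |w x| ^ ((p:ℝ) - 2) * (deriv w x) ^ 2) ^ ((1:ℝ) / 2) := by
  have hwc : Continuous w := hw.continuous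
  have hw' : Continuous (deriv w) := hw.continuous_deriv le_rfl
  set μ : Measure ℝ := volume.restrict (Set.Ioc (0:ℝ) 1) with hμdef
  haveI : IsProbabilityMeasure μ := ⟨by simp [hμdef]⟩
  have hp2 : (2:ℝ) ≤ (p:ℝ) := by exact_mod_cast hp
  have hq0 : (0:ℝ) < q := lt_of_le_of_lt (by positivity) hq1
  set r : ℝ := 2 * q - (p:ℝ) with hrdef
  have hr0 : 0 < r := by simp only [hrdef]; linarith
  have hrle : r ≤ (p:ℝ) + 2 := by simp only [hrdef]; linarith
  set f : ℝ → ℝ := fun x => |w x| ^ (q - (p:ℝ)/2) with hfdef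
  set g : ℝ → ℝ := fun x => |w x| ^ (((p:ℝ) - 2)/2) * |deriv w x| with hgdef
  have hfc : Continuous f := cont_abs_rpow hwc (by linarith)
  have hgc : Continuous g := (cont_abs_rpow hwc (by linarith)).mul hw'.abs
  have hfnn : ∀ x, 0 ≤ f x := fun x => Real.rpow_nonneg (abs_nonneg _) _
  have hgnn : ∀ x, 0 ≤ g x := fun x => mul_nonneg (Real.rpow_nonneg (abs_nonneg _) _) (abs_nonneg _)
  have hpt : ∀ x, |w x| ^ (q - 1) * |deriv w x| = f x * g x := by
    intro x
    have h1 : q - 1 = (q - (p:ℝ)/2) + (((p:ℝ) - 2)/2) := by ring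
    rw [hfdef, hgdef, h1, Real.rpow_add' (abs_nonneg _) (by rw [← h1]; linarith)]
    ring
  have hf2 : ∀ x, f x ^ (2:ℝ) = |w x| ^ r := by
    intro x
    simp only [hfdef]
    rw [← Real.rpow_mul (abs_nonneg _)]
    congr 1
    simp only [hrdef]; ring
  have hg2 : ∀ x, g x ^ (2:ℝ) = |w x| ^ ((p:ℝ) - 2) * (deriv w x) ^ 2 := by
    intro x
    simp only [hgdef]
    rw [Real.mul_rpow (Real.rpow_nonneg (abs_nonneg _) _) (abs_nonneg _),
      ← Real.rpow_mul (abs_nonneg _)]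
    congr 1
    · congr 1; ring
    · rw [show (2:ℝ) = ((2:ℕ):ℝ) by norm_num, Real.rpow_natCast, sq_abs]
  -- Cauchy-Schwarz step
  have key1 : ∫ x, f x * g x ∂μ ≤
      (∫ x, |w x| ^ r ∂μ) ^ ((1:ℝ)/2) *
        (∫ x, |w x| ^ ((p:ℝ) - 2) * (deriv w x) ^ 2 ∂μ) ^ ((1:ℝ)/2) := by
    have := integral_mul_le_Lp_mul_Lq_of_nonneg (μ := μ)
      ((Real.holderConjugate_iff_eq_conjExponent (p := 2) (q := 2) (by norm_num)).2 (by norm_num))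
      (Filter.Eventually.of_forall hfnn) (Filter.Eventually.of_forall hgnn)
      (memLp_of_cont hfc _) (memLp_of_cont hgc _)
    calc ∫ x, f x * g x ∂μ
        ≤ (∫ x, f x ^ (2:ℝ) ∂μ) ^ ((1:ℝ)/2) * (∫ x, g x ^ (2:ℝ) ∂μ) ^ ((1:ℝ)/2) := this
      _ = _ := by rw [integral_congr_ae (Filter.Eventually.of_forall fun x => hf2 x),
            integral_congr_ae (Filter.Eventually.of_forall fun x => hg2 x)]
  -- Jensen / Hölder step
  have key2 : ∫ x, |w x| ^ r ∂μ ≤ (∫ x, |w x| ^ ((p:ℝ) + 2) ∂μ) ^ (r / ((p:ℝ) + 2)) := by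
    rcases eq_or_lt_of_le hrle with heq | hlt
    · rw [heq, div_self (by positivity), Real.rpow_one]
    · set a : ℝ := ((p:ℝ) + 2) / r with hadef
      have ha1 : 1 < a := (one_lt_div hr0).2 hlt
      have hconj := Real.HolderConjugate.conjExponent ha1
      have hFc : Continuous fun x => |w x| ^ r := cont_abs_rpow hwc hr0.le
      have := integral_mul_le_Lp_mul_Lq_of_nonneg (μ := μ) hconj
        (Filter.Eventually.of_forall fun x => Real.rpow_nonneg (abs_nonneg _) r)
        (Filter.Eventually.of_forall fun _ => zero_le_one)
        (memLp_of_cont hFc _) (memLp_of_cont continuous_const _)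
      simp only [mul_one] at this
      have h1 : ∀ x : ℝ, (|w x| ^ r) ^ a = |w x| ^ ((p:ℝ) + 2) := by
        intro x
        rw [← Real.rpow_mul (abs_nonneg _)]
        congr 1
        rw [hadef]; field_simp
      have h2 : ∫ x, (1:ℝ) ^ (Real.conjExponent a) ∂μ = 1 := by
        simp [Real.one_rpow]
      calc ∫ x, |w x| ^ r ∂μ
          ≤ (∫ x, (|w x| ^ r) ^ a ∂μ) ^ (1/a) *
              (∫ _x, (1:ℝ) ^ (Real.conjExponent a) ∂μ) ^ (1/(Real.conjExponent a)) := this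
        _ = (∫ x, |w x| ^ ((p:ℝ) + 2) ∂μ) ^ (r / ((p:ℝ) + 2)) := by
            rw [h2, Real.one_rpow, mul_one,
              integral_congr_ae (Filter.Eventually.of_forall h1)]
            congr 1
            rw [hadef]; field_simp
  -- assemble
  have hA0 : 0 ≤ ∫ x, |w x| ^ ((p:ℝ) - 2) * (deriv w x) ^ 2 ∂μ :=
    integral_nonneg fun x => mul_nonneg (Real.rpow_nonneg (abs_nonneg _) _) (sq_nonneg _)
  have hB0 : 0 ≤ ∫ x, |w x| ^ ((p:ℝ) + 2) ∂μ :=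
    integral_nonneg fun x => Real.rpow_nonneg (abs_nonneg _) _
  have key3 : (∫ x, |w x| ^ r ∂μ) ^ ((1:ℝ)/2) ≤
      (∫ x, |w x| ^ ((p:ℝ) + 2) ∂μ) ^ (r / (2 * ((p:ℝ) + 2))) := by
    calc (∫ x, |w x| ^ r ∂μ) ^ ((1:ℝ)/2)
        ≤ ((∫ x, |w x| ^ ((p:ℝ) + 2) ∂μ) ^ (r / ((p:ℝ) + 2))) ^ ((1:ℝ)/2) :=
          Real.rpow_le_rpow (integral_nonneg fun x => Real.rpow_nonneg (abs_nonneg _) _)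
            key2 (by norm_num)
      _ = _ := by
          rw [← Real.rpow_mul hB0, div_mul_div_comm, mul_one, mul_comm ((p:ℝ)+2) 2]
  -- rewrite interval integrals as μ-integrals
  have hiv : ∀ F : ℝ → ℝ, ∫ x in (0:ℝ)..1, F x = ∫ x, F x ∂μ := fun F =>
    intervalIntegral.integral_of_le (by norm_num)
  rw [hiv, hiv, hiv]
  calc ∫ x, q * |w x| ^ (q - 1) * |deriv w x| ∂μ
      = q * ∫ x, f x * g x ∂μ := by
        rw [← integral_const_mul]
        exact integral_congr_ae (Filter.Eventually.of_forall fun x => by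
          show q * |w x| ^ (q - 1) * |deriv w x| = q * (f x * g x)
          rw [← hpt x]; ring)
    _ ≤ q * ((∫ x, |w x| ^ r ∂μ) ^ ((1:ℝ)/2) *
          (∫ x, |w x| ^ ((p:ℝ) - 2) * (deriv w x) ^ 2 ∂μ) ^ ((1:ℝ)/2)) :=
        mul_le_mul_of_nonneg_left key1 hq0.le
    _ ≤ q * ((∫ x, |w x| ^ ((p:ℝ) + 2) ∂μ) ^ (r / (2 * ((p:ℝ) + 2))) *
          (∫ x, |w x| ^ ((p:ℝ) - 2) * (deriv w x) ^ 2 ∂μ) ^ ((1:ℝ)/2)) := by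
        refine mul_le_mul_of_nonneg_left
          (mul_le_mul_of_nonneg_right key3 (Real.rpow_nonneg hA0 _)) hq0.le
    _ = _ := by rw [hrdef, mul_assoc]
end

section
/- Let p≥2 be an even integer and let w:𝕋→ℝ be continuously differentiable with spatial mean m := ∫_𝕋 w. Let ρ:𝕋→ℝ be twice continuously differentiable with -∂_{xx}ρ = w - m. Then ∫_𝕋 (∂_x ρ)·w^p·(∂_x w) dx = (1/(p+1))·( ∫_𝕋 w^{p+2} - m·∫_𝕋 w^{p+1} ). -/
open MeasureTheory

theorem stmt_5 (p : ℕ) (hp : 2 ≤ p) (hpeven : Even p)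
    (w ρ : ℝ → ℝ) (hwper : Function.Periodic w 1) (hw : ContDiff ℝ 1 w)
    (hρper : Function.Periodic ρ 1) (hρ : ContDiff ℝ 2 ρ)
    (m : ℝ) (hm : m = ∫ x in (0:ℝ)..1, w x)
    (hpoisson : ∀ x, - deriv (deriv ρ) x = w x - m) :
    ∫ x in (0:ℝ)..1, deriv ρ x * w x ^ p * deriv w x =
      (1 / ((p:ℝ) + 1)) *
        ((∫ x in (0:ℝ)..1, w x ^ (p + 2)) - m * ∫ x in (0:ℝ)..1, w x ^ (p + 1)) := by
  have hc : ((p:ℝ) + 1) ≠ 0 := by positivity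
  have hwc : Continuous w := hw.continuous
  have hwd : Differentiable ℝ w := hw.differentiable one_ne_zero
  have hρ2 : ContDiff ℝ ((1:ℕ) + 1) ρ := by exact_mod_cast hρ
  have hρd1 : ContDiff ℝ 1 (deriv ρ) := (contDiff_succ_iff_deriv.mp hρ2).2.2
  have hρdd : Differentiable ℝ (deriv ρ) := hρd1.differentiable one_ne_zero
  set v : ℝ → ℝ := fun x => (1 / ((p:ℝ) + 1)) * w x ^ (p + 1) with hv
  have hu : ∀ x ∈ Set.uIcc (0:ℝ) 1, HasDerivAt (deriv ρ) (m - w x) x := by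
    intro x _
    have h := (hρdd x).hasDerivAt
    have : deriv (deriv ρ) x = m - w x := by have := hpoisson x; linarith
    rwa [this] at h
  have hvd : ∀ x ∈ Set.uIcc (0:ℝ) 1,
      HasDerivAt v (w x ^ p * deriv w x) x := by
    intro x _
    have h : HasDerivAt (fun y => (1 / ((p:ℝ) + 1)) * w y ^ (p + 1))
        ((1 / ((p:ℝ) + 1)) * (↑(p + 1) * w x ^ (p + 1 - 1) * deriv w x)) x :=
      ((hwd x).hasDerivAt.pow (p + 1)).const_mul (1 / ((p:ℝ) + 1))
    convert h using 1
    push_cast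
    field_simp
  have hu' : IntervalIntegrable (fun x => m - w x) volume 0 1 :=
    (continuous_const.sub hwc).intervalIntegrable 0 1
  have hv' : IntervalIntegrable (fun x => w x ^ p * deriv w x) volume 0 1 :=
    ((hwc.pow p).mul (hw.continuous_deriv le_rfl)).intervalIntegrable 0 1
  have parts := intervalIntegral.integral_mul_deriv_eq_deriv_mul hu hvd hu' hv'
  have hρfun : (fun x => ρ (x + 1)) = ρ := funext hρper
  have hb1 : deriv ρ 1 = deriv ρ 0 := by
    have h := deriv_comp_add_const ρ 1 0
    rw [hρfun, zero_add] at h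
    exact h.symm
  have hw10 : w 1 = w 0 := by simpa using hwper 0
  have hb2 : v 1 = v 0 := by simp only [hv]; rw [hw10]
  have key : (∫ x in (0:ℝ)..1, deriv ρ x * (w x ^ p * deriv w x)) =
      - ∫ x in (0:ℝ)..1, (m - w x) * v x := by
    rw [parts, hb1, hb2]; ring
  have hls : (∫ x in (0:ℝ)..1, deriv ρ x * w x ^ p * deriv w x) =
      ∫ x in (0:ℝ)..1, deriv ρ x * (w x ^ p * deriv w x) := by
    simp_rw [mul_assoc]
  have hptw : ∀ x : ℝ, (m - w x) * v x =
      (1 / ((p:ℝ) + 1)) * (m * w x ^ (p + 1)) - (1 / ((p:ℝ) + 1)) * w x ^ (p + 2) := by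
    intro x
    simp only [hv]
    ring
  have hint1 : IntervalIntegrable (fun x => (1 / ((p:ℝ) + 1)) * (m * w x ^ (p + 1))) volume 0 1 :=
    (continuous_const.mul (continuous_const.mul (hwc.pow (p+1)))).intervalIntegrable 0 1
  have hint2 : IntervalIntegrable (fun x => (1 / ((p:ℝ) + 1)) * w x ^ (p + 2)) volume 0 1 :=
    (continuous_const.mul (hwc.pow (p+2))).intervalIntegrable 0 1
  have hrhs : (∫ x in (0:ℝ)..1, (m - w x) * v x) =
      (1 / ((p:ℝ) + 1)) * (m * ∫ x in (0:ℝ)..1, w x ^ (p + 1)) -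
      (1 / ((p:ℝ) + 1)) * ∫ x in (0:ℝ)..1, w x ^ (p + 2) := by
    simp_rw [hptw]
    rw [intervalIntegral.integral_sub hint1 hint2,
      intervalIntegral.integral_const_mul, intervalIntegral.integral_const_mul,
      intervalIntegral.integral_const_mul]
  rw [hls, key, hrhs]
  ring
end
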